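/- Define K(s,t) = 1 + st + ∫₀¹ max(t−u,0)·max(s−u,0) du and K_G(s,t) = K(s,t) + (−1 + (s+t)/2 − st/3)·(st)² for s,t ∈ [0,1]. Then K_G is the reproducing kernel of the space of H² functions on [0,1] vanishing to first order at both endpoints, for the inner product ⟨f,g⟩ = ∫₀¹ f'' g'': precisely, for every t ∈ [0,1] and every C² function f : [0,1] → ℝ with f(0) = f'(0) = f(1) = f'(1) = 0, one has ∫₀¹ f''(s) · ∂²ₛK_G(s,t) ds = f(t), where ∂²ₛ denotes the second partial derivative with respect to the first variable; explicitly ∂²ₛK_G(s,t) = max(t−s,0) + t²(−2 + t + 3s − 2st). -/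

import Mathlib

open Set intervalIntegral

/-- The reproducing kernel `K(s,t) = 1 + st + ∫₀¹ (t−u)₊ (s−u)₊ du` of `H²([0,1])`. -/
noncomputable def Kker (s t : ℝ) : ℝ :=
  1 + s * t + ∫ u in (0:ℝ)..1, max (t - u) 0 * max (s - u) 0

/-- The kernel `K_G(s,t) = K(s,t) + (−1 + (s+t)/2 − st/3)(st)²` of `H₀²([0,1])`. -/
noncomputable def KGker (s t : ℝ) : ℝ :=
  Kker s t + (-1 + (s + t) / 2 - s * t / 3) * (s * t) ^ 2

private lemma cubic_hasDerivAt (a0 a1 a2 a3 x : ℝ) :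
    HasDerivAt (fun y : ℝ => a0 + a1 * y + a2 * y ^ 2 + a3 * y ^ 3)
      (a1 + 2 * a2 * x + 3 * a3 * x ^ 2) x := by
  have h := (((hasDerivAt_const x a0).add ((hasDerivAt_id x).const_mul a1)).add
      ((hasDerivAt_pow 2 x).const_mul a2)).add ((hasDerivAt_pow 3 x).const_mul a3)
  refine h.congr_deriv ?_
  push_cast
  ring

private lemma quad_hasDerivAt (a0 a1 a2 x : ℝ) :
    HasDerivAt (fun y : ℝ => a0 + a1 * y + a2 * y ^ 2) (a1 + 2 * a2 * x) x := by
  have h := ((hasDerivAt_const x a0).add ((hasDerivAt_id x).const_mul a1)).add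
      ((hasDerivAt_pow 2 x).const_mul a2)
  refine h.congr_deriv ?_
  push_cast
  ring

private lemma hdwa_of_nmem_closure {f : ℝ → ℝ} {f' x : ℝ} {s : Set ℝ}
    (h : x ∉ closure s) : HasDerivWithinAt f f' s x :=
  hasDerivWithinAt_iff_hasFDerivWithinAt.2 (HasFDerivWithinAt.of_notMem_closure h)

private lemma piecewise_hdwa {t : ℝ} {g gL gR : ℝ → ℝ} {d : ℝ} {s : ℝ}
    (hs : s ∈ Icc (0:ℝ) 1)
    (hL : ∀ σ ∈ Icc (0:ℝ) 1 ∩ Iic t, g σ = gL σ)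
    (hR : ∀ σ ∈ Icc (0:ℝ) 1 ∩ Ici t, g σ = gR σ)
    (hdL : s ≤ t → HasDerivAt gL d s) (hdR : t ≤ s → HasDerivAt gR d s) :
    HasDerivWithinAt g d (Icc (0:ℝ) 1) s := by
  have hunion : Icc (0:ℝ) 1 ⊆ (Icc (0:ℝ) 1 ∩ Iic t) ∪ (Icc (0:ℝ) 1 ∩ Ici t) := by
    intro x hx
    rcases le_total x t with h | h
    · exact Or.inl ⟨hx, h⟩
    · exact Or.inr ⟨hx, h⟩
  have hLw : HasDerivWithinAt g d (Icc (0:ℝ) 1 ∩ Iic t) s := by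
    by_cases hst : s ≤ t
    · exact ((hdL hst).hasDerivWithinAt).congr hL (hL s ⟨hs, hst⟩)
    · refine hdwa_of_nmem_closure fun hcl => hst ?_
      exact (isClosed_Iic.closure_subset_iff.2 inter_subset_right) hcl
  have hRw : HasDerivWithinAt g d (Icc (0:ℝ) 1 ∩ Ici t) s := by
    by_cases hst : t ≤ s
    · exact ((hdR hst).hasDerivWithinAt).congr hR (hR s ⟨hs, hst⟩)
    · refine hdwa_of_nmem_closure fun hcl => hst ?_
      exact (isClosed_Ici.closure_subset_iff.2 inter_subset_right) hcl
  exact (hLw.union hRw).mono hunion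

private lemma kint_eval {t σ : ℝ} (h0 : 0 ≤ σ) (h1 : σ ≤ 1) (hst : σ ≤ t) :
    (∫ u in (0:ℝ)..1, max (t - u) 0 * max (σ - u) 0) = t * σ ^ 2 / 2 - σ ^ 3 / 6 := by
  have hcont : Continuous fun u : ℝ => max (t - u) 0 * max (σ - u) 0 :=
    ((continuous_const.sub continuous_id).max continuous_const).mul
      ((continuous_const.sub continuous_id).max continuous_const)
  have hi1 : IntervalIntegrable (fun u : ℝ => max (t - u) 0 * max (σ - u) 0)
      MeasureTheory.volume 0 σ := hcont.intervalIntegrable _ _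
  have hi2 : IntervalIntegrable (fun u : ℝ => max (t - u) 0 * max (σ - u) 0)
      MeasureTheory.volume σ 1 := hcont.intervalIntegrable _ _
  rw [← intervalIntegral.integral_add_adjacent_intervals hi1 hi2]
  have h2 : (∫ u in σ..1, max (t - u) 0 * max (σ - u) 0) = 0 := by
    rw [intervalIntegral.integral_congr (g := fun _ => (0:ℝ))]
    · simp
    · intro u hu
      rw [uIcc_of_le h1] at hu
      have : σ - u ≤ 0 := by linarith [hu.1]
      simp [max_eq_right this]
  have h1' : (∫ u in (0:ℝ)..σ, max (t - u) 0 * max (σ - u) 0)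
      = ∫ u in (0:ℝ)..σ, (t - u) * (σ - u) := by
    apply intervalIntegral.integral_congr
    intro u hu
    rw [uIcc_of_le h0] at hu
    simp only []
    rw [max_eq_left (by linarith [hu.2] : (0:ℝ) ≤ t - u),
        max_eq_left (by linarith [hu.2] : (0:ℝ) ≤ σ - u)]
  have h3 : (∫ u in (0:ℝ)..σ, (t - u) * (σ - u)) = t * σ ^ 2 / 2 - σ ^ 3 / 6 := by
    have hd : ∀ u ∈ uIcc (0:ℝ) σ,
        HasDerivAt (fun y : ℝ => 0 + t * σ * y + (-(t + σ) / 2) * y ^ 2 + (1/3 : ℝ) * y ^ 3)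
          ((t - u) * (σ - u)) u := by
      intro u _
      have h := cubic_hasDerivAt 0 (t * σ) (-(t + σ) / 2) (1/3) u
      have e : t * σ + 2 * (-(t + σ) / 2) * u + 3 * ((1:ℝ)/3) * u ^ 2 = (t - u) * (σ - u) := by
        ring
      rwa [e] at h
    rw [intervalIntegral.integral_eq_sub_of_hasDerivAt hd
      ((by fun_prop : Continuous fun u : ℝ => (t - u) * (σ - u)).intervalIntegrable _ _)]
    ring
  rw [h2, h1', h3]
  ring

private noncomputable def D1e (t σ : ℝ) : ℝ :=
  t + t * min σ t - min σ t ^ 2 / 2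
    + (-2 * σ * t ^ 2 + 3 * σ ^ 2 * t ^ 2 / 2 + σ * t ^ 3 - σ ^ 2 * t ^ 3)

private lemma hKL {t : ℝ} (_ht0 : 0 ≤ t) (_ht1 : t ≤ 1) :
    ∀ σ ∈ Icc (0:ℝ) 1 ∩ Iic t, KGker σ t =
      1 + t * σ + (t / 2 - t ^ 2 + t ^ 3 / 2) * σ ^ 2
        + (-(1:ℝ) / 6 + t ^ 2 / 2 - t ^ 3 / 3) * σ ^ 3 := by
  rintro σ ⟨⟨hσ0, hσ1⟩, hσt⟩
  unfold KGker Kker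
  rw [kint_eval hσ0 hσ1 hσt]
  ring

private lemma hKR {t : ℝ} (ht0 : 0 ≤ t) (ht1 : t ≤ 1) :
    ∀ σ ∈ Icc (0:ℝ) 1 ∩ Ici t, KGker σ t =
      (1 - t ^ 3 / 6) + (t + t ^ 2 / 2) * σ + (-t ^ 2 + t ^ 3 / 2) * σ ^ 2
        + (t ^ 2 / 2 - t ^ 3 / 3) * σ ^ 3 := by
  rintro σ ⟨⟨hσ0, hσ1⟩, hσt⟩
  unfold KGker Kker
  have hc : (∫ u in (0:ℝ)..1, max (t - u) 0 * max (σ - u) 0)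
      = ∫ u in (0:ℝ)..1, max (σ - u) 0 * max (t - u) 0 := by
    apply intervalIntegral.integral_congr
    intro u _
    simp only []
    ring
  rw [hc, kint_eval ht0 ht1 hσt]
  ring

private lemma hd1 {t : ℝ} (ht0 : 0 ≤ t) (ht1 : t ≤ 1) :
    ∀ σ ∈ Icc (0:ℝ) 1, HasDerivWithinAt (fun σ => KGker σ t) (D1e t σ) (Icc (0:ℝ) 1) σ := by
  intro σ hσ
  refine piecewise_hdwa (t := t) hσ (hKL ht0 ht1) (hKR ht0 ht1)
    (fun hst => ?_) (fun hst => ?_)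
  · have h := cubic_hasDerivAt 1 t (t / 2 - t ^ 2 + t ^ 3 / 2)
      (-(1:ℝ) / 6 + t ^ 2 / 2 - t ^ 3 / 3) σ
    have e : t + 2 * (t / 2 - t ^ 2 + t ^ 3 / 2) * σ
        + 3 * (-(1:ℝ) / 6 + t ^ 2 / 2 - t ^ 3 / 3) * σ ^ 2 = D1e t σ := by
      unfold D1e
      rw [min_eq_left hst]
      ring
    rwa [e] at h
  · have h := cubic_hasDerivAt (1 - t ^ 3 / 6) (t + t ^ 2 / 2) (-t ^ 2 + t ^ 3 / 2)
      (t ^ 2 / 2 - t ^ 3 / 3) σ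
    have e : t + t ^ 2 / 2 + 2 * (-t ^ 2 + t ^ 3 / 2) * σ
        + 3 * (t ^ 2 / 2 - t ^ 3 / 3) * σ ^ 2 = D1e t σ := by
      unfold D1e
      rw [min_eq_right hst]
      ring
    rwa [e] at h

private lemma hd2 {t s : ℝ} (_ht0 : 0 ≤ t) (_ht1 : t ≤ 1) (hs : s ∈ Icc (0:ℝ) 1) :
    HasDerivWithinAt (D1e t)
      (max (t - s) 0 + t ^ 2 * (-2 + t + 3 * s - 2 * s * t)) (Icc (0:ℝ) 1) s := by
  refine piecewise_hdwa (t := t)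
    (gL := fun σ => t + (t - 2 * t ^ 2 + t ^ 3) * σ
      + (-(1:ℝ) / 2 + 3 * t ^ 2 / 2 - t ^ 3) * σ ^ 2)
    (gR := fun σ => (t + t ^ 2 / 2) + (-2 * t ^ 2 + t ^ 3) * σ
      + (3 * t ^ 2 / 2 - t ^ 3) * σ ^ 2)
    hs ?_ ?_ (fun hst => ?_) (fun hst => ?_)
  · rintro σ ⟨_, hσt⟩
    unfold D1e
    rw [min_eq_left hσt]
    ring
  · rintro σ ⟨_, hσt⟩
    unfold D1e
    rw [min_eq_right hσt]
    ring
  · have h := quad_hasDerivAt t (t - 2 * t ^ 2 + t ^ 3) (-(1:ℝ) / 2 + 3 * t ^ 2 / 2 - t ^ 3) s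
    have e : t - 2 * t ^ 2 + t ^ 3 + 2 * (-(1:ℝ) / 2 + 3 * t ^ 2 / 2 - t ^ 3) * s
        = max (t - s) 0 + t ^ 2 * (-2 + t + 3 * s - 2 * s * t) := by
      rw [max_eq_left (by linarith : (0:ℝ) ≤ t - s)]
      ring
    rwa [e] at h
  · have h := quad_hasDerivAt (t + t ^ 2 / 2) (-2 * t ^ 2 + t ^ 3) (3 * t ^ 2 / 2 - t ^ 3) s
    have e : -2 * t ^ 2 + t ^ 3 + 2 * (3 * t ^ 2 / 2 - t ^ 3) * s
        = max (t - s) 0 + t ^ 2 * (-2 + t + 3 * s - 2 * s * t) := by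
      rw [max_eq_right (by linarith : t - s ≤ 0)]
      ring
    rwa [e] at h


private noncomputable def Afun (t : ℝ) (f f' : ℝ → ℝ) (s : ℝ) : ℝ :=
  (t - s) * f' s + f s + t ^ 2 * (-2 + t) * f' s + t ^ 2 * (3 - 2 * t) * (s * f' s - f s)

private noncomputable def Qfun (t : ℝ) (f f' : ℝ → ℝ) (s : ℝ) : ℝ :=
  t ^ 2 * (-2 + t) * f' s + t ^ 2 * (3 - 2 * t) * (s * f' s - f s)

private lemma part2 {t : ℝ} (ht0 : 0 ≤ t) (ht1 : t ≤ 1)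
    (f f' f'' : ℝ → ℝ)
    (hf : ∀ s ∈ Icc (0:ℝ) 1, HasDerivWithinAt f (f' s) (Icc (0:ℝ) 1) s)
    (hf' : ∀ s ∈ Icc (0:ℝ) 1, HasDerivWithinAt f' (f'' s) (Icc (0:ℝ) 1) s)
    (hf''c : ContinuousOn f'' (Icc (0:ℝ) 1))
    (h00 : f 0 = 0) (h10 : f' 0 = 0) (h01 : f 1 = 0) (h11 : f' 1 = 0) :
    (∫ s in (0:ℝ)..1, f'' s * (max (t - s) 0 + t ^ 2 * (-2 + t + 3 * s - 2 * s * t))) = f t := by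
  have hfc : ContinuousOn f (Icc (0:ℝ) 1) := fun s hs => (hf s hs).continuousWithinAt
  have hf'c : ContinuousOn f' (Icc (0:ℝ) 1) := fun s hs => (hf' s hs).continuousWithinAt
  have hGc : Continuous fun s : ℝ => max (t - s) 0 + t ^ 2 * (-2 + t + 3 * s - 2 * s * t) := by
    fun_prop
  have hsub1 : Icc (0:ℝ) t ⊆ Icc 0 1 := Icc_subset_Icc le_rfl ht1
  have hsub2 : Icc t 1 ⊆ Icc (0:ℝ) 1 := Icc_subset_Icc ht0 le_rfl
  have hD : ∀ x ∈ Ioo (0:ℝ) 1, HasDerivAt f (f' x) x ∧ HasDerivAt f' (f'' x) x := by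
    intro x hx
    have hmem : Icc (0:ℝ) 1 ∈ nhds x := Icc_mem_nhds hx.1 hx.2
    exact ⟨(hf x (Ioo_subset_Icc_self hx)).hasDerivAt hmem,
      (hf' x (Ioo_subset_Icc_self hx)).hasDerivAt hmem⟩
  have hi1 : IntervalIntegrable
      (fun s => f'' s * (max (t - s) 0 + t ^ 2 * (-2 + t + 3 * s - 2 * s * t)))
      MeasureTheory.volume 0 t := by
    apply ContinuousOn.intervalIntegrable
    rw [uIcc_of_le ht0]
    exact (hf''c.mono hsub1).mul hGc.continuousOn
  have hi2 : IntervalIntegrable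
      (fun s => f'' s * (max (t - s) 0 + t ^ 2 * (-2 + t + 3 * s - 2 * s * t)))
      MeasureTheory.volume t 1 := by
    apply ContinuousOn.intervalIntegrable
    rw [uIcc_of_le ht1]
    exact (hf''c.mono hsub2).mul hGc.continuousOn
  rw [← intervalIntegral.integral_add_adjacent_intervals hi1 hi2]
  have hJ1 : (∫ s in (0:ℝ)..t, f'' s * (max (t - s) 0 + t ^ 2 * (-2 + t + 3 * s - 2 * s * t)))
      = ∫ s in (0:ℝ)..t, f'' s * ((t - s) + t ^ 2 * (-2 + t + 3 * s - 2 * s * t)) := by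
    apply intervalIntegral.integral_congr
    intro u hu
    rw [uIcc_of_le ht0] at hu
    simp only []
    rw [max_eq_left (by linarith [hu.2] : (0:ℝ) ≤ t - u)]
  have hJ2 : (∫ s in t..(1:ℝ), f'' s * (max (t - s) 0 + t ^ 2 * (-2 + t + 3 * s - 2 * s * t)))
      = ∫ s in t..(1:ℝ), f'' s * (0 + t ^ 2 * (-2 + t + 3 * s - 2 * s * t)) := by
    apply intervalIntegral.integral_congr
    intro u hu
    rw [uIcc_of_le ht1] at hu
    simp only []
    rw [max_eq_right (by linarith [hu.1] : t - u ≤ 0)]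
  have hFTC1 : (∫ s in (0:ℝ)..t, f'' s * ((t - s) + t ^ 2 * (-2 + t + 3 * s - 2 * s * t)))
      = Afun t f f' t - Afun t f f' 0 := by
    refine intervalIntegral.integral_eq_sub_of_hasDeriv_right_of_le ht0 ?_ ?_ ?_
    · have h1 := hf'c.mono hsub1
      have h2 := hfc.mono hsub1
      unfold Afun
      exact ((((continuousOn_const.sub continuousOn_id).mul h1).add h2).add
        (continuousOn_const.mul h1)).add
        (continuousOn_const.mul ((continuousOn_id.mul h1).sub h2))
    · intro x hx
      have hx1 : x ∈ Ioo (0:ℝ) 1 := ⟨hx.1, lt_of_lt_of_le hx.2 ht1⟩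
      obtain ⟨hd1, hd2⟩ := hD x hx1
      have h := (((((hasDerivAt_id x).const_sub t).mul hd2).add hd1).add
        (hd2.const_mul (t ^ 2 * (-2 + t)))).add
        ((((hasDerivAt_id x).mul hd2).sub hd1).const_mul (t ^ 2 * (3 - 2 * t)))
      have e : HasDerivAt (Afun t f f')
          (f'' x * ((t - x) + t ^ 2 * (-2 + t + 3 * x - 2 * x * t))) x := by
        refine h.congr_deriv ?_
        simp only [id_eq]
        ring
      exact e.hasDerivWithinAt
    · apply ContinuousOn.intervalIntegrable
      rw [uIcc_of_le ht0]
      exact (hf''c.mono hsub1).mul (by fun_prop :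
        Continuous fun s : ℝ => (t - s) + t ^ 2 * (-2 + t + 3 * s - 2 * s * t)).continuousOn
  have hFTC2 : (∫ s in t..(1:ℝ), f'' s * (0 + t ^ 2 * (-2 + t + 3 * s - 2 * s * t)))
      = Qfun t f f' 1 - Qfun t f f' t := by
    refine intervalIntegral.integral_eq_sub_of_hasDeriv_right_of_le ht1 ?_ ?_ ?_
    · have h1 := hf'c.mono hsub2
      have h2 := hfc.mono hsub2
      unfold Qfun
      exact (continuousOn_const.mul h1).add
        (continuousOn_const.mul ((continuousOn_id.mul h1).sub h2))
    · intro x hx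
      have hx1 : x ∈ Ioo (0:ℝ) 1 := ⟨lt_of_le_of_lt ht0 hx.1, hx.2⟩
      obtain ⟨hd1, hd2⟩ := hD x hx1
      have h := (hd2.const_mul (t ^ 2 * (-2 + t))).add
        ((((hasDerivAt_id x).mul hd2).sub hd1).const_mul (t ^ 2 * (3 - 2 * t)))
      have e : HasDerivAt (Qfun t f f')
          (f'' x * (0 + t ^ 2 * (-2 + t + 3 * x - 2 * x * t))) x := by
        refine h.congr_deriv ?_
        simp only [id_eq]
        ring
      exact e.hasDerivWithinAt
    · apply ContinuousOn.intervalIntegrable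
      rw [uIcc_of_le ht1]
      exact (hf''c.mono hsub2).mul (by fun_prop :
        Continuous fun s : ℝ => (0:ℝ) + t ^ 2 * (-2 + t + 3 * s - 2 * s * t)).continuousOn
  rw [hJ1, hJ2, hFTC1, hFTC2]
  unfold Afun Qfun
  rw [h00, h10, h01, h11]
  ring

/-- `K_G` is the reproducing kernel of the space of `H²` functions on `[0,1]`
vanishing to first order at both endpoints, with inner product `∫₀¹ f'' g''`: its second
`s`-derivative is `∂²ₛK_G(s,t) = (t−s)₊ + t²(−2 + t + 3s − 2st)` and for every `C²` function
`f` with `f(0) = f'(0) = f(1) = f'(1) = 0` one has `∫₀¹ f''(s) ∂²ₛK_G(s,t) ds = f(t)`. -/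
theorem stmt_14 :
    ∀ t ∈ Icc (0:ℝ) 1,
      (∀ s ∈ Icc (0:ℝ) 1,
        derivWithin (derivWithin (fun σ => KGker σ t) (Icc (0:ℝ) 1)) (Icc (0:ℝ) 1) s =
          max (t - s) 0 + t ^ 2 * (-2 + t + 3 * s - 2 * s * t)) ∧
      ∀ f f' f'' : ℝ → ℝ,
        (∀ s ∈ Icc (0:ℝ) 1, HasDerivWithinAt f (f' s) (Icc (0:ℝ) 1) s) →
        (∀ s ∈ Icc (0:ℝ) 1, HasDerivWithinAt f' (f'' s) (Icc (0:ℝ) 1) s) →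
        ContinuousOn f'' (Icc (0:ℝ) 1) →
        f 0 = 0 → f' 0 = 0 → f 1 = 0 → f' 1 = 0 →
        (∫ s in (0:ℝ)..1, f'' s * (max (t - s) 0 + t ^ 2 * (-2 + t + 3 * s - 2 * s * t)))
          = f t := by
  intro t ht
  obtain ⟨ht0, ht1⟩ := ht
  refine ⟨fun s hs => ?_, fun f f' f'' hf hf' hf''c h00 h10 h01 h11 =>
    part2 ht0 ht1 f f' f'' hf hf' hf''c h00 h10 h01 h11⟩
  have hder1 : EqOn (derivWithin (fun σ => KGker σ t) (Icc (0:ℝ) 1)) (D1e t) (Icc (0:ℝ) 1) :=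
    fun σ hσ => (hd1 ht0 ht1 σ hσ).derivWithin (uniqueDiffOn_Icc zero_lt_one σ hσ)
  rw [derivWithin_congr hder1 (hder1 hs)]
  exact (hd2 ht0 ht1 hs).derivWithin (uniqueDiffOn_Icc zero_lt_one s hs)
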